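/- Let (f^* : A ⥤ B, g^* : C ⥤ D, h : A ⥤ C, k : B ⥤ D) together with right adjoints f_* of f^* and g_* of g^* and a natural isomorphism α : k ∘ f^* ≅ g^* ∘ h form a horizontally right adjointable square. Assume moreover that k preserves all small colimits and that every object of B is the colimit of some small diagram all of whose values lie in the essential image of f^*. If f_* Y is h-local for an object Y of B, then Y is k-local. -/

import Mathlib

open CategoryTheory CategoryTheory.Limits

universe w v₁ v₃ v₄ u₁ u₂ u₃ u₄

/-- `X` is `F`-local if `F` induces a bijection `Hom(Z, X) → Hom(F Z, F X)` for all `Z`. -/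
def Local {C : Type u₁} {D : Type u₂} [Category.{v₁} C] [Category.{v₂} D]
    (F : C ⥤ D) (X : C) : Prop :=
  ∀ Z : C, Function.Bijective (fun f : Z ⟶ X => F.map f)

theorem stmt8 {A : Type u₁} {B : Type u₂} {C : Type u₃} {D : Type u₄}
    [Category.{v₁} A] [Category.{w} B] [Category.{v₃} C] [Category.{v₄} D]
    (fstar : A ⥤ B) (fpush : B ⥤ A) (adjf : fstar ⊣ fpush)
    (gstar : C ⥤ D) (gpush : D ⥤ C) (adjg : gstar ⊣ gpush)
    (h : A ⥤ C) (k : B ⥤ D) (α : fstar ⋙ k ≅ h ⋙ gstar)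
    (hmate : IsIso (mateEquiv adjf adjg α.inv))
    [PreservesColimitsOfSize.{w, w} k]
    (hcover : ∀ b : B, ∃ (J : Cat.{w, w}) (W : J ⥤ B) (c : Cocone W),
      (∀ j : J, fstar.essImage (W.obj j)) ∧ Nonempty (IsColimit c) ∧ Nonempty (c.pt ≅ b))
    (Y : B) (hY : Local h (fpush.obj Y)) :
    Local k Y := by
  -- transport bijectivity along an isomorphism in the source
  have htrans : ∀ {Z₁ Z₂ : B} (e : Z₁ ≅ Z₂),
      Function.Bijective (fun f : Z₁ ⟶ Y => k.map f) →
      Function.Bijective (fun f : Z₂ ⟶ Y => k.map f) := by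
    intro Z₁ Z₂ e hZ
    constructor
    · intro f g hfg
      simp only at hfg
      have : e.hom ≫ f = e.hom ≫ g := hZ.1 (by simp [hfg])
      exact (Iso.cancel_iso_hom_left e f g).mp this
    · intro t
      obtain ⟨s, hs⟩ := hZ.2 (k.map e.hom ≫ t)
      simp only at hs
      refine ⟨e.inv ≫ s, ?_⟩
      simp only [Functor.map_comp, hs]
      simp [← Category.assoc, ← Functor.map_comp]
  set μ := mateEquiv adjf adjg α.inv with hμ
  -- bijectivity for objects in the essential image of `fstar`
  have ess : ∀ {Z' : B}, fstar.essImage Z' →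
      Function.Bijective (fun f : Z' ⟶ Y => k.map f) := by
    rintro Z' ⟨a, ⟨e⟩⟩
    refine htrans e ?_
    have key : ∀ f : fstar.obj a ⟶ Y,
        k.map f = α.hom.app a ≫
          gstar.map (h.map ((adjf.homEquiv a Y) f) ≫ μ.app Y) ≫
          adjg.counit.app (k.obj Y) := by
      intro f
      rw [gstar.map_comp, Category.assoc, mateEquiv_counit adjf adjg α.inv Y]
      have hnat := α.inv.naturality ((adjf.homEquiv a Y) f)
      simp only [Functor.comp_map] at hnat
      rw [← Category.assoc (gstar.map _), hnat]
      simp only [← Category.assoc, Iso.hom_inv_id_app, Category.id_comp]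
      conv_rhs => rw [← k.map_comp]
      exact (congrArg k.map ((adjf.homEquiv a Y).symm_apply_apply f)).symm
    have hμiso : IsIso (μ.app Y) := @NatIso.isIso_app_of_isIso _ _ _ _ _ _ μ hmate Y
    let E : (fstar.obj a ⟶ Y) ≃ (k.obj (fstar.obj a) ⟶ k.obj Y) :=
      (adjf.homEquiv a Y).trans <|
      (Equiv.ofBijective _ (hY a)).trans <|
      (Iso.homCongr (Iso.refl (h.obj a)) (asIso (μ.app Y))).trans <|
      ((adjg.homEquiv (h.obj a) (k.obj Y)).symm).trans <|
      (Iso.homCongr (asIso (α.hom.app a)).symm (Iso.refl (k.obj Y)))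
    have hEeq : (fun f : fstar.obj a ⟶ Y => k.map f) = E := by
      funext f
      rw [key f]
      simp [E, Iso.homCongr_apply, Adjunction.homEquiv_counit]
    rw [hEeq]
    exact E.bijective
  intro Z
  obtain ⟨J, W, c, hW, ⟨hc⟩, ⟨e⟩⟩ := hcover Z
  refine htrans e ?_
  have hkc : IsColimit (k.mapCocone c) := isColimitOfPreserves k hc
  constructor
  · intro f g hfg
    simp only at hfg
    refine hc.hom_ext fun j => ?_
    exact (ess (hW j)).1 (by simp [hfg])
  · intro t
    choose s hs using fun j => (ess (hW j)).2 (k.map (c.ι.app j) ≫ t)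
    simp only at hs
    have natural : ∀ {j j' : J} (u : j ⟶ j'), W.map u ≫ s j' = s j := by
      intro j j' u
      apply (ess (hW j)).1
      simp only [Functor.map_comp, hs, ← Category.assoc, ← k.map_comp, c.w u]
    refine ⟨hc.desc ⟨Y, ⟨s, fun {j j'} u => by simp [natural u]⟩⟩, ?_⟩
    refine hkc.hom_ext fun j => ?_
    simp only [Functor.mapCocone_ι_app, ← k.map_comp, hc.fac]
    exact hs j
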